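/- Let A : ℝ^n → ℝ^n continuous, B maximal monotone with closed graph, sequences x^k → x̃, β_k → β̃ ∈ (0, ∞), J^k := (I + β_k B)^{-1}(x^k − β_k A(x^k)) → J̃ := (I + β̃B)^{-1}(x̃ − β̃A(x̃)), y^k := α_k J^k + (1 − α_k) x^k with α_k → 0, and u^k ∈ B(y^k) with u^k → ũ. If ⟨A(y^k) + u^k, x^k − J^k⟩ < (δ/β_k)‖x^k − J^k‖² for all k with δ ∈ (0,1), then in the limit ⟨A(x̃) + ũ, x̃ − J̃⟩ ≤ (δ/β̃)‖x̃ − J̃‖², and combining with the resolvent identity and monotonicity of B yields x̃ = J̃, i.e., 0 ∈ A(x̃) + B(x̃). -/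
import Mathlib


open RealInnerProductSpace Filter Topology

/-- `B` is a monotone set-valued operator. -/
def MonotoneOp {n : ℕ} (B : EuclideanSpace ℝ (Fin n) → Set (EuclideanSpace ℝ (Fin n))) : Prop :=
  ∀ x y u v, u ∈ B x → v ∈ B y → 0 ≤ ⟪x - y, u - v⟫

/-- `B` is a maximal monotone set-valued operator. -/
def MaximalMonotoneOp {n : ℕ}
    (B : EuclideanSpace ℝ (Fin n) → Set (EuclideanSpace ℝ (Fin n))) : Prop :=
  MonotoneOp B ∧ ∀ x u, (∀ y v, v ∈ B y → 0 ≤ ⟪x - y, u - v⟫) → u ∈ B x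

/-- Passing to the limit in the failed line-search inequalities yields a solution:
under the stated convergences, `x̃ = J̃` and `0 ∈ A(x̃) + B(x̃)`. -/
theorem lineSearch_limit_case {n : ℕ}
    (A : EuclideanSpace ℝ (Fin n) → EuclideanSpace ℝ (Fin n)) (hA : Continuous A)
    (B : EuclideanSpace ℝ (Fin n) → Set (EuclideanSpace ℝ (Fin n)))
    (hB : MaximalMonotoneOp B)
    (hBclosed : ∀ (y u : ℕ → EuclideanSpace ℝ (Fin n)) (yt ut : EuclideanSpace ℝ (Fin n)),
      (∀ k, u k ∈ B (y k)) → Tendsto y atTop (𝓝 yt) → Tendsto u atTop (𝓝 ut) → ut ∈ B yt)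
    (δ : ℝ) (hδ : δ ∈ Set.Ioo (0 : ℝ) 1)
    (x Jk y u : ℕ → EuclideanSpace ℝ (Fin n)) (β α : ℕ → ℝ)
    (xt Jt ut : EuclideanSpace ℝ (Fin n)) (βt : ℝ)
    (hβpos : ∀ k, 0 < β k) (hβt : 0 < βt)
    (hxk : Tendsto x atTop (𝓝 xt)) (hβk : Tendsto β atTop (𝓝 βt))
    (hJres : ∀ k, ∃ v ∈ B (Jk k), x k - β k • A (x k) = Jk k + β k • v)
    (hJtres : ∃ v ∈ B Jt, xt - βt • A xt = Jt + βt • v)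
    (hJk : Tendsto Jk atTop (𝓝 Jt))
    (hy : ∀ k, y k = α k • Jk k + (1 - α k) • x k)
    (hα : Tendsto α atTop (𝓝 0))
    (hu : ∀ k, u k ∈ B (y k)) (hut : Tendsto u atTop (𝓝 ut))
    (hineq : ∀ k, ⟪A (y k) + u k, x k - Jk k⟫ < (δ / β k) * ‖x k - Jk k‖ ^ 2) :
    (⟪A xt + ut, xt - Jt⟫ ≤ (δ / βt) * ‖xt - Jt‖ ^ 2) ∧
    xt = Jt ∧ ∃ b ∈ B xt, A xt + b = 0 := by
  -- y k → xt
  have hyk : Tendsto y atTop (𝓝 xt) := by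
    have : Tendsto (fun k => α k • Jk k + (1 - α k) • x k) atTop
        (𝓝 ((0:ℝ) • Jt + (1 - 0 : ℝ) • xt)) := by
      exact (hα.smul hJk).add ((tendsto_const_nhds.sub hα).smul hxk)
    simpa [funext hy] using this
  have hutB : ut ∈ B xt := hBclosed y u xt ut hu hyk hut
  -- limit inequality
  have hlim1 : Tendsto (fun k => ⟪A (y k) + u k, x k - Jk k⟫) atTop
      (𝓝 ⟪A xt + ut, xt - Jt⟫) := by
    exact Tendsto.inner (((hA.tendsto xt).comp hyk).add hut) (hxk.sub hJk)
  have hlim2 : Tendsto (fun k => (δ / β k) * ‖x k - Jk k‖ ^ 2) atTop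
      (𝓝 ((δ / βt) * ‖xt - Jt‖ ^ 2)) := by
    exact (tendsto_const_nhds.div hβk hβt.ne').mul
      (((hxk.sub hJk).norm).pow 2)
  have h1 : ⟪A xt + ut, xt - Jt⟫ ≤ (δ / βt) * ‖xt - Jt‖ ^ 2 :=
    le_of_tendsto_of_tendsto hlim1 hlim2 (Eventually.of_forall fun k => (hineq k).le)
  refine ⟨h1, ?_⟩
  obtain ⟨v, hvB, hvres⟩ := hJtres
  have hres : xt - Jt = βt • (A xt + v) := by
    have h : xt - Jt = (xt - βt • A xt) - Jt + βt • A xt := by abel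
    rw [h, hvres, smul_add]; abel
  have hmono : 0 ≤ ⟪xt - Jt, ut - v⟫ := hB.1 xt Jt ut v hutB hvB
  have h2 : (1 / βt) * ‖xt - Jt‖ ^ 2 ≤ ⟪A xt + ut, xt - Jt⟫ := by
    have hsplit : ⟪A xt + ut, xt - Jt⟫ = ⟪A xt + v, xt - Jt⟫ + ⟪ut - v, xt - Jt⟫ := by
      rw [← inner_add_left]; congr 1; abel
    rw [hsplit]
    have hAv : ⟪A xt + v, xt - Jt⟫ = (1 / βt) * ‖xt - Jt‖ ^ 2 := by
      have he : A xt + v = (1 / βt) • (xt - Jt) := by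
        rw [hres, smul_smul, one_div_mul_cancel hβt.ne', one_smul]
      rw [he, real_inner_smul_left, real_inner_self_eq_norm_sq]
    rw [hAv]
    nlinarith [hmono, real_inner_comm (xt - Jt) (ut - v)]
  have hc : 0 < 1 / βt - δ / βt := by
    rw [← sub_div]
    exact div_pos (by linarith [hδ.2]) hβt
  have hsq : ‖xt - Jt‖ ^ 2 ≤ 0 := by
    by_contra hpos
    push_neg at hpos
    nlinarith [mul_pos hc hpos, h1.trans' h2]
  have hxtJt : xt = Jt := by
    have h0 : ‖xt - Jt‖ ^ 2 = 0 := le_antisymm hsq (sq_nonneg _)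
    have h1' : xt - Jt = 0 := norm_eq_zero.mp ((pow_eq_zero_iff two_ne_zero).mp h0)
    exact sub_eq_zero.mp h1'
  refine ⟨hxtJt, v, hxtJt ▸ hvB, ?_⟩
  have hz : βt • (A xt + v) = 0 := by rw [← hres, hxtJt, sub_self]
  rcases smul_eq_zero.mp hz with h | h
  · exact absurd h hβt.ne'
  · exact h
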